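/- Every nonempty word w admits an inverse Lyndon factorization, i.e., a sequence (m_1, ..., m_k) of inverse Lyndon words with w = m_1 ⋯ m_k and m_1 ≪ m_2 ≪ ... ≪ m_k. Moreover, if w is a Lyndon word which is not a single letter, then every inverse Lyndon factorization of w has at least two factors (k > 1). -/

import Mathlib

def LexLt {α : Type*} [LinearOrder α] (x y : List α) : Prop :=
  List.Lex (· < ·) x y

def LexLl {α : Type*} [LinearOrder α] (x y : List α) : Prop :=
  LexLt x y ∧ ¬ (x <+: y ∧ x ≠ y)

def IsInvLyndonWord {α : Type*} [LinearOrder α] (w : List α) : Prop :=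
  w ≠ [] ∧ ∀ s : List α, s <:+ w → s ≠ w → s ≠ [] → LexLt s w

def IsLyndonWord {α : Type*} [LinearOrder α] (w : List α) : Prop :=
  w ≠ [] ∧ ∀ s : List α, s <:+ w → s ≠ w → s ≠ [] → LexLt w s

def IsInvLyndonFact {α : Type*} [LinearOrder α] (w : List α) (ms : List (List α)) : Prop :=
  ms ≠ [] ∧ w = ms.flatten ∧ (∀ m ∈ ms, IsInvLyndonWord m) ∧ ms.Chain' LexLl

section Aux

variable {α : Type*} [LinearOrder α]

/-- Strict comparison at a first difference. -/
def SLt (x y : List α) : Prop :=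
  ∃ (c s t : List α) (a b : α), a < b ∧ x = c ++ a :: s ∧ y = c ++ b :: t

lemma lexLt_iff_lt {x y : List α} : LexLt x y ↔ x < y := Iff.rfl

lemma lexLt_trans {x y z : List α} (h1 : LexLt x y) (h2 : LexLt y z) : LexLt x z :=
  lexLt_iff_lt.mpr (lt_trans (lexLt_iff_lt.mp h1) (lexLt_iff_lt.mp h2))

lemma lexLt_asymm {x y : List α} (h1 : LexLt x y) (h2 : LexLt y x) : False :=
  lt_asymm (lexLt_iff_lt.mp h1) (lexLt_iff_lt.mp h2)

lemma lexLt_total {x y : List α} (h : x ≠ y) : LexLt x y ∨ LexLt y x := by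
  rcases lt_trichotomy x y with h1 | h1 | h1
  · exact Or.inl (lexLt_iff_lt.mpr h1)
  · exact absurd h1 h
  · exact Or.inr (lexLt_iff_lt.mpr h1)

lemma slt_mono {x y u v : List α} (h : SLt x y) : SLt (x ++ u) (y ++ v) := by
  obtain ⟨c, s, t, a, b, hab, hx, hy⟩ := h
  exact ⟨c, s ++ u, t ++ v, a, b, hab, by simp [hx], by simp [hy]⟩

lemma lexLt_append_right : ∀ (x r : List α), r ≠ [] → LexLt x (x ++ r)
  | [], [], hr => absurd rfl hr
  | [], _ :: _, _ => List.Lex.nil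
  | _ :: t, r, hr => List.Lex.cons (lexLt_append_right t r hr)

lemma lexLt_of_prefix {x y : List α} (h : x <+: y) (hne : x ≠ y) : LexLt x y := by
  obtain ⟨r, rfl⟩ := h
  have hr : r ≠ [] := by rintro rfl; simp at hne
  exact lexLt_append_right x r hr

lemma lexLt_append_left {c x y : List α} (h : LexLt (c ++ x) (c ++ y)) : LexLt x y := by
  induction c with
  | nil => simpa using h
  | cons a t ih =>
    exact ih (List.lex_cons_iff.mp h)

lemma slt_lexLt {x y : List α} (h : SLt x y) : LexLt x y := by
  obtain ⟨c, s, t, a, b, hab, rfl, rfl⟩ := h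
  induction c with
  | nil => exact List.Lex.rel hab
  | cons d e ih => exact List.Lex.cons ih

lemma slt_not_prefix {x y : List α} (h : SLt x y) : ¬ x <+: y := by
  obtain ⟨c, s, t, a, b, hab, rfl, rfl⟩ := h
  rintro ⟨r, hr⟩
  have hr' : a :: (s ++ r) = b :: t := by
    apply List.append_cancel_left (as := c)
    simpa using hr
  have : a = b := by injection hr'
  exact absurd hab (by simp [this])

lemma compare4 (x y : List α) : SLt x y ∨ SLt y x ∨ x <+: y ∨ y <+: x := by
  induction x generalizing y with
  | nil => exact Or.inr (Or.inr (Or.inl (List.nil_prefix)))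
  | cons a xs ih =>
    cases y with
    | nil => exact Or.inr (Or.inr (Or.inr (List.nil_prefix)))
    | cons b ys =>
      rcases lt_trichotomy a b with h | rfl | h
      · exact Or.inl ⟨[], xs, ys, a, b, h, rfl, rfl⟩
      · rcases ih ys with h | h | h | h
        · obtain ⟨c, s, t, a', b', hab, rfl, rfl⟩ := h
          exact Or.inl ⟨a :: c, s, t, a', b', hab, rfl, rfl⟩
        · obtain ⟨c, s, t, a', b', hab, rfl, rfl⟩ := h
          exact Or.inr (Or.inl ⟨a :: c, s, t, a', b', hab, rfl, rfl⟩)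
        · exact Or.inr (Or.inr (Or.inl (List.cons_prefix_cons.mpr ⟨rfl, h⟩)))
        · exact Or.inr (Or.inr (Or.inr (List.cons_prefix_cons.mpr ⟨rfl, h⟩)))
      · exact Or.inr (Or.inl ⟨[], ys, xs, b, a, h, rfl, rfl⟩)

lemma slt_trans {x y z : List α} (h1 : SLt x y) (h2 : SLt y z) : SLt x z := by
  rcases compare4 x z with h | h | h | h
  · exact h
  · exact absurd (slt_lexLt h2) (fun h2' =>
      lexLt_asymm (lexLt_trans (slt_lexLt h) (slt_lexLt h1)) h2')
  · obtain ⟨r, rfl⟩ := h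
    have : SLt (x ++ r) (y ++ []) := slt_mono h1
    rw [List.append_nil] at this
    exact absurd (slt_lexLt h2) (fun h2' => lexLt_asymm (slt_lexLt this) h2')
  · obtain ⟨r, rfl⟩ := h
    have : SLt (y ++ []) (z ++ r) := slt_mono h2
    rw [List.append_nil] at this
    exact absurd (slt_lexLt h1) (fun h1' => lexLt_asymm (slt_lexLt this) h1')

lemma slt_lexLl {x y : List α} (h : SLt x y) : LexLl x y :=
  ⟨slt_lexLt h, fun ⟨hp, _⟩ => slt_not_prefix h hp⟩

lemma singleton_invLyndon (a : α) : IsInvLyndonWord [a] := by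
  refine ⟨by simp, fun s hs hne hnil => ?_⟩
  obtain ⟨p, hp⟩ := hs
  cases s with
  | nil => exact absurd rfl hnil
  | cons b t =>
    have hlen := congrArg List.length hp
    simp at hlen
    have : p = [] ∧ t = [] := by constructor <;> (apply List.eq_nil_of_length_eq_zero; omega)
    obtain ⟨rfl, rfl⟩ := this
    simp at hp
    exact absurd (by rw [hp]) hne

lemma getLast_suffix_join : ∀ (ms : List (List α)) (h : ms ≠ []), ms.getLast h <:+ ms.flatten
  | [x], _ => by simp
  | x :: y :: r, _ => by
    have h1 := getLast_suffix_join (y :: r) (by simp)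
    have h2 : (x :: y :: r).flatten = x ++ (y :: r).flatten := rfl
    rw [List.getLast_cons (by simp), h2]
    exact h1.trans (List.suffix_append _ _)

lemma suffix_append_cases {s x m : List α} (h : s <:+ x ++ m) :
    s <:+ m ∨ ∃ s₁, s₁ <:+ x ∧ s₁ ≠ [] ∧ s = s₁ ++ m := by
  obtain ⟨p, hp⟩ := h
  rcases List.append_eq_append_iff.mp hp with ⟨a', ha1, ha2⟩ | ⟨c', hc1, hc2⟩
  · cases a' with
    | nil => simp at ha2; exact Or.inl (ha2 ▸ List.suffix_refl m)
    | cons b t =>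
      exact Or.inr ⟨b :: t, ⟨p, ha1.symm⟩, by simp, ha2⟩
  · exact Or.inl ⟨c', hc2.symm⟩

/-- Key lemma: if `m` is inverse Lyndon and no `x ++ m` (for `x` a nonempty suffix of `u`)
is inverse Lyndon, then every nonempty suffix of `u` is SLt-below `m`. -/
lemma claimG {u m : List α} (hm : IsInvLyndonWord m)
    (hmax : ∀ x, x <:+ u → x ≠ [] → ¬ IsInvLyndonWord (x ++ m)) :
    ∀ x, x <:+ u → x ≠ [] → SLt x m := by
  have main : ∀ n, ∀ x : List α, x.length = n → x <:+ u → x ≠ [] → SLt x m := by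
    intro n
    induction n using Nat.strong_induction_on with
    | _ n ih =>
      intro x hxn hxu hxne
      have hnotinv := hmax x hxu hxne
      have hxm_ne : x ++ m ≠ [] := by simp [hxne]
      -- extract a violating suffix s
      have hs : ∃ s, s <:+ x ++ m ∧ s ≠ x ++ m ∧ s ≠ [] ∧ ¬ LexLt s (x ++ m) := by
        by_contra hcon
        push_neg at hcon
        exact hnotinv ⟨hxm_ne, fun s h1 h2 h3 => hcon s h1 h2 h3⟩
      obtain ⟨s, hs1, hs2, hs3, hs4⟩ := hs
      have hgt : LexLt (x ++ m) s := by
        rcases lexLt_total hs2 with h | h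
        · exact absurd h hs4
        · exact h
      rcases suffix_append_cases hs1 with hsm | ⟨s₁, hs₁x, hs₁ne, rfl⟩
      · -- Case A : s is a suffix of m ; derive LexLt (x++m) m
        have hA : LexLt (x ++ m) m := by
          by_cases hsme : s = m
          · exact hsme ▸ hgt
          · exact lexLt_trans hgt (hm.2 s hsm hsme hs3)
        -- compare x and m
        rcases compare4 x m with h | h | h | h
        · exact h
        · -- SLt m x : contradiction
          have : SLt (m ++ []) (x ++ m) := slt_mono h
          rw [List.append_nil] at this
          exact absurd (slt_lexLt this) (fun h' => lexLt_asymm hA h')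
        · -- x <+: m
          obtain ⟨r, hr⟩ := h
          cases r with
          | nil =>
            rw [List.append_nil] at hr
            subst hr
            have hx2 : LexLt x (x ++ x) := lexLt_append_right x x hxne
            exact (lexLt_asymm hA hx2).elim
          | cons b t =>
            -- m = x ++ (b :: t)
            have hA' : LexLt (x ++ (x ++ b :: t)) (x ++ b :: t) := by rw [hr]; exact hA
            have hmr : LexLt (x ++ b :: t) (b :: t) := lexLt_append_left hA'
            have hmr' : LexLt m (b :: t) := by rw [← hr]; exact hmr
            have hrm : LexLt (b :: t) m := by
              apply hm.2 (b :: t)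
              · exact ⟨x, hr⟩
              · intro hbm
                have h1 := congrArg List.length hr
                rw [hbm, List.length_append] at h1
                have hx0 : x.length = 0 := by omega
                exact hxne (List.length_eq_zero_iff.mp hx0)
              · simp
            exact (lexLt_asymm hmr' hrm).elim
        · -- m <+: x
          obtain ⟨r, hr⟩ := h
          have hlt2 : LexLt m (x ++ m) := by
            apply lexLt_of_prefix ⟨r ++ m, by rw [← List.append_assoc, hr]⟩
            intro hmx
            have h1 := congrArg List.length hmx
            rw [List.length_append] at h1
            have : x.length = 0 := by omega
            exact hxne (List.length_eq_zero_iff.mp this)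
          exact (lexLt_asymm hA hlt2).elim
      · -- Case B : s = s₁ ++ m with s₁ a nonempty proper suffix of x
        have hs₁nex : s₁ ≠ x := by rintro rfl; exact hs2 rfl
        have hlt : s₁.length < x.length := by
          have hle := hs₁x.length_le
          rcases lt_or_eq_of_le hle with h | h
          · exact h
          · exact absurd (hs₁x.eq_of_length h) hs₁nex
        have hIH : SLt s₁ m :=
          ih s₁.length (hxn ▸ hlt) s₁ rfl (hs₁x.trans hxu) hs₁ne
        rcases compare4 x s₁ with h | h | h | h
        · exact slt_trans h hIH
        · -- SLt s₁ x : contradiction with hgt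
          have : SLt (s₁ ++ m) (x ++ m) := slt_mono h
          exact absurd (slt_lexLt this) (fun h' => lexLt_asymm hgt h')
        · -- x <+: s₁ : impossible by length
          have := h.length_le
          omega
        · -- s₁ <+: x
          obtain ⟨r, hr⟩ := h
          have : SLt (s₁ ++ r) (m ++ []) := slt_mono hIH
          rw [List.append_nil, hr] at this
          exact this

  intro x hxu hxne
  exact main x.length x rfl hxu hxne

lemma exists_fact : ∀ n (w : List α), w.length = n → w ≠ [] → ∃ ms, IsInvLyndonFact w ms := by
  intro n
  induction n using Nat.strong_induction_on with
  | _ n ih =>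
    intro w hwn hwne
    classical
    -- find the least index i such that drop i is inverse Lyndon
    have hbase : ∃ i, IsInvLyndonWord (w.drop i) := by
      refine ⟨w.length - 1, ?_⟩
      have hlen : (w.drop (w.length - 1)).length = 1 := by
        rw [List.length_drop]
        have : 0 < w.length := List.length_pos_iff.mpr hwne
        omega
      obtain ⟨a, ha⟩ := List.length_eq_one_iff.mp hlen
      rw [ha]; exact singleton_invLyndon a
    let i := Nat.find hbase
    have hPi : IsInvLyndonWord (w.drop i) := Nat.find_spec hbase
    have hmin : ∀ j < i, ¬ IsInvLyndonWord (w.drop j) := fun j hj => Nat.find_min hbase hj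
    have hile : i ≤ w.length - 1 := Nat.find_min' hbase (by
      have hlen : (w.drop (w.length - 1)).length = 1 := by
        rw [List.length_drop]
        have : 0 < w.length := List.length_pos_iff.mpr hwne
        omega
      obtain ⟨a, ha⟩ := List.length_eq_one_iff.mp hlen
      rw [ha]; exact singleton_invLyndon a)
    have hwpos : 0 < w.length := List.length_pos_iff.mpr hwne
    have hilt : i < w.length := by omega
    set m := w.drop i with hm
    set u := w.take i with hu
    have hw : u ++ m = w := List.take_append_drop i w
    have hulen : u.length = i := by rw [hu, List.length_take]; omega
    have hmlen : m.length = w.length - i := by rw [hm, List.length_drop]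
    -- maximality condition for claimG
    have hmax : ∀ x, x <:+ u → x ≠ [] → ¬ IsInvLyndonWord (x ++ m) := by
      intro x hxu hxne
      have hxw : x ++ m <:+ w := by
        rw [← hw]
        obtain ⟨p, hp⟩ := hxu
        exact ⟨p, by rw [← List.append_assoc, hp]⟩
      have hxlen : 0 < x.length := List.length_pos_iff.mpr hxne
      have hxleu : x.length ≤ u.length := hxu.length_le
      have hdrop : x ++ m = w.drop (w.length - (x ++ m).length) :=
        List.suffix_iff_eq_drop.mp hxw
      have hjlen : (x ++ m).length = x.length + m.length := by simp
      have hjlt : w.length - (x ++ m).length < i := by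
        rw [hjlen, hmlen]
        omega
      rw [hdrop]
      exact hmin _ hjlt
    by_cases hi0 : i = 0
    · -- w itself is inverse Lyndon
      have h0 : List.drop i w = w := by rw [hi0]; simp
      have hww : IsInvLyndonWord w := by rw [hm, h0] at hPi; exact hPi
      refine ⟨[w], by simp, by simp, ?_, by simp [List.Chain']⟩
      intro m' hm'
      simp at hm'
      rw [hm']
      exact hww
    · -- recurse on u
      have hune : u ≠ [] := by
        intro h
        rw [h] at hulen
        simp at hulen
        exact hi0 hulen.symm
      have hult : u.length < n := by omega
      obtain ⟨ms', hfact⟩ := ih u.length hult u rfl hune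
      obtain ⟨hne', hjoin', hinv', hchain'⟩ := hfact
      refine ⟨ms' ++ [m], by simp, ?_, ?_, ?_⟩
      · rw [← hw, hjoin']
        simp
      · intro m' hm'
        rcases List.mem_append.mp hm' with h | h
        · exact hinv' m' h
        · simp at h; exact h ▸ hPi
      · rw [show List.Chain' LexLl (ms' ++ [m]) = List.IsChain LexLl (ms' ++ [m]) from rfl, List.isChain_append]
        refine ⟨hchain', by simp, ?_⟩
        intro a ha y hy
        simp at hy
        subst hy
        rw [List.getLast?_eq_getLast_of_ne_nil hne'] at ha
        simp at ha
        subst ha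
        have hlast_suffix : ms'.getLast hne' <:+ u :=
          hjoin' ▸ getLast_suffix_join ms' hne'
        have hlast_ne : ms'.getLast hne' ≠ [] :=
          (hinv' _ (List.getLast_mem hne')).1
        exact slt_lexLl (claimG hPi hmax _ hlast_suffix hlast_ne)

end Aux

theorem stmt13 {α : Type*} [LinearOrder α] (w : List α) (hw : w ≠ []) :
    (∃ ms : List (List α), IsInvLyndonFact w ms) ∧
    (IsLyndonWord w → (¬ ∃ a : α, w = [a]) →
      ∀ ms : List (List α), IsInvLyndonFact w ms → 1 < ms.length) := by
  constructor
  · exact exists_fact w.length w rfl hw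
  · intro hL hS ms hfact
    obtain ⟨hne, hjoin, hinv, _⟩ := hfact
    by_contra hlen
    push_neg at hlen
    have h1 : ms.length = 1 := by
      have : 0 < ms.length := List.length_pos_iff.mpr hne
      omega
    obtain ⟨m, hm⟩ := List.length_eq_one_iff.mp h1
    subst hm
    have hwm : w = m := by simpa using hjoin
    have hinvw : IsInvLyndonWord w := hwm ▸ hinv m (by simp)
    -- w has length ≥ 2
    have hlen2 : 2 ≤ w.length := by
      have h0 : 0 < w.length := List.length_pos_iff.mpr hw
      rcases Nat.lt_or_ge w.length 2 with h | h
      · have : w.length = 1 := by omega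
        exact absurd (List.length_eq_one_iff.mp this) hS
      · exact h
    -- take the suffix obtained by dropping the first letter
    cases w with
    | nil => exact hw rfl
    | cons a t =>
      have hsuf : t <:+ a :: t := ⟨[a], rfl⟩
      have htne : t ≠ [] := by
        intro h
        subst h
        simp at hlen2
      have htnew : t ≠ a :: t := by
        intro h
        have := congrArg List.length h
        simp at this
      exact lexLt_asymm (hinvw.2 t hsuf htnew htne) (hL.2 t hsuf htnew htne)
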